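/- Let α > 1, t > 0, p ∈ [0,1] and x ∈ ℝ, x ≠ 0. Define the asymmetric Fresnel pseudo-density u_{2α,p}(x,t) = (1/((α t)^{1/α})) · [ p · Ai_α(−x/(α t)^{1/α}) + (1−p) · Ai_α(x/(α t)^{1/α}) ]. Then u_{2α,p}(x,t) = (α t/(π x)) · ∫_0^∞ e^{-t y^α} y^{α-1} sin(x y cos(π/(2α))) · ( p e^{x y sin(π/(2α))} + (1−p) e^{−x y sin(π/(2α))} ) dy. -/

import Mathlib

open Real MeasureTheory Set

open Filter
open scoped Nat

lemma aux_exp_tsum (z : ℂ) : Complex.exp z = ∑' n : ℕ, z ^ n / n ! := by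
  rw [Complex.exp_eq_exp_ℂ, NormedSpace.exp_eq_tsum_div]

lemma aux_im_exp_mul (c θ : ℝ) :
    ((c : ℂ) * Complex.exp ((θ : ℂ) * Complex.I)).im = c * Real.sin θ := by
  rw [Complex.im_ofReal_mul, Complex.exp_ofReal_mul_I_im]

lemma aux_series (a ψ : ℝ) :
    Real.sin (a * Real.cos ψ) * Real.exp (a * Real.sin ψ) =
      ∑' k : ℕ, a ^ k / k ! * Real.sin (k * (π / 2 - ψ)) := by
  set z : ℂ := (a : ℂ) * Complex.exp ((↑(π / 2 - ψ) : ℂ) * Complex.I) with hz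
  have hre : z.re = a * Real.sin ψ := by
    rw [hz, Complex.re_ofReal_mul, Complex.exp_ofReal_mul_I_re, Real.cos_pi_div_two_sub]
  have him : z.im = a * Real.cos ψ := by
    rw [hz, Complex.im_ofReal_mul, Complex.exp_ofReal_mul_I_im, Real.sin_pi_div_two_sub]
  have h1 : Real.sin (a * Real.cos ψ) * Real.exp (a * Real.sin ψ) = (Complex.exp z).im := by
    rw [Complex.exp_im, hre, him]; ring
  have hpow : ∀ k : ℕ, z ^ k / (k ! : ℂ)
      = ((a ^ k / k ! : ℝ) : ℂ) * Complex.exp ((↑((k : ℝ) * (π / 2 - ψ)) : ℂ) * Complex.I) := by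
    intro k
    rw [hz, mul_pow, ← Complex.exp_nat_mul]
    push_cast
    ring_nf
  rw [h1, aux_exp_tsum z,
    show (∑' n : ℕ, z ^ n / (n ! : ℂ)).im = Complex.imCLM (∑' n : ℕ, z ^ n / (n ! : ℂ)) from rfl,
    ContinuousLinearMap.map_tsum Complex.imCLM (NormedSpace.expSeries_div_summable z)]
  refine tsum_congr fun k => ?_
  rw [show Complex.imCLM (z ^ k / (k ! : ℂ)) = (z ^ k / (k ! : ℂ)).im from rfl, hpow k,
    aux_im_exp_mul]

lemma aux_gamma_add_le {s δ : ℝ} (hs : 0 < s) (hδ0 : 0 < δ) (hδ1 : δ < 1) :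
    Real.Gamma (s + δ) ≤ Real.Gamma s * s ^ δ := by
  have h := Real.Gamma_mul_add_mul_le_rpow_Gamma_mul_rpow_Gamma hs
    (by linarith : (0:ℝ) < s + 1) (by linarith : (0:ℝ) < 1 - δ) hδ0 (by ring)
  have he : (1 - δ) * s + δ * (s + 1) = s + δ := by ring
  rw [he] at h
  have hΓ : 0 < Real.Gamma s := Real.Gamma_pos_of_pos hs
  have h2 : Real.Gamma s ^ (1 - δ) * Real.Gamma s ^ δ = Real.Gamma s := by
    rw [← Real.rpow_add hΓ, sub_add_cancel, Real.rpow_one]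
  calc Real.Gamma (s + δ) ≤ Real.Gamma s ^ (1 - δ) * Real.Gamma (s + 1) ^ δ := h
    _ = Real.Gamma s ^ (1 - δ) * (s ^ δ * Real.Gamma s ^ δ) := by
        rw [Real.Gamma_add_one hs.ne', Real.mul_rpow hs.le hΓ.le]
    _ = (Real.Gamma s ^ (1 - δ) * Real.Gamma s ^ δ) * s ^ δ := by ring
    _ = Real.Gamma s * s ^ δ := by rw [h2]

lemma aux_summable {α : ℝ} (hα : 1 < α) (a C : ℝ) (ha : 0 < a) (hC : 0 < C) :
    Summable (fun k : ℕ => C ^ k / k ! * Real.Gamma (((k : ℝ) + a) / α)) := by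
  have hα0 : (0:ℝ) < α := by linarith
  have hδ : (0:ℝ) < 1/α := by positivity
  have hδ1 : 1/α < 1 := by rw [div_lt_one hα0]; linarith
  refine summable_of_ratio_norm_eventually_le (r := 1/2) (by norm_num) ?_
  have htend : Tendsto (fun k : ℕ => ((k:ℝ) + 1) ^ (1/α - 1)) atTop (nhds 0) := by
    have h1 : Tendsto (fun y : ℝ => y ^ (-(1 - 1/α))) atTop (nhds 0) :=
      tendsto_rpow_neg_atTop (by linarith)
    have h2 : Tendsto (fun k : ℕ => ((k:ℝ) + 1)) atTop atTop :=
      tendsto_atTop_add_const_right _ 1 tendsto_natCast_atTop_atTop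
    have := h1.comp h2
    simpa [Function.comp_def, show -(1 - 1/α) = 1/α - 1 by ring] using this
  have hev : ∀ᶠ k : ℕ in atTop, ((k:ℝ) + 1) ^ (1/α - 1) ≤ 1 / (2 * C * (a + 1)) :=
    htend.eventually_le_const (by positivity)
  filter_upwards [hev] with k hk
  have hspos : (0:ℝ) < ((k:ℝ) + a) / α := by positivity
  set s : ℝ := ((k:ℝ) + a) / α with hs
  have hΓs : 0 < Real.Gamma s := Real.Gamma_pos_of_pos hspos
  have hΓs1 : 0 < Real.Gamma (s + 1/α) := Real.Gamma_pos_of_pos (by positivity)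
  have hpos1 : (0:ℝ) < C ^ (k+1) / (k+1)! * Real.Gamma (s + 1/α) := by positivity
  have hpos0 : (0:ℝ) < C ^ k / k ! * Real.Gamma s := by positivity
  have hstep : ((k:ℝ) + 1 + a) / α = s + 1/α := by rw [hs]; ring
  have hcast : ((k+1 : ℕ) : ℝ) = (k:ℝ) + 1 := by push_cast; ring
  have hG : Real.Gamma (s + 1/α) ≤ Real.Gamma s * s ^ (1/α) :=
    aux_gamma_add_le hspos hδ hδ1
  have hsb : s ^ (1/α) ≤ (a + 1) * ((k:ℝ) + 1) ^ (1/α) := by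
    have h1 : s ≤ ((k:ℝ) + 1) * (a + 1) := by
      rw [hs, div_le_iff₀ hα0]
      have hh : ((k:ℝ)+1)*(a+1) ≤ ((k:ℝ)+1)*(a+1)*α :=
        le_mul_of_one_le_right (by positivity) hα.le
      nlinarith [Nat.cast_nonneg (α := ℝ) k, ha.le, hh]
    have h7 : (a+1) ^ (1/α) ≤ a+1 := by
      calc (a+1) ^ (1/α) ≤ (a+1) ^ (1:ℝ) :=
            Real.rpow_le_rpow_of_exponent_le (by linarith) hδ1.le
        _ = a+1 := Real.rpow_one _
    calc s ^ (1/α) ≤ (((k:ℝ) + 1) * (a + 1)) ^ (1/α) :=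
          Real.rpow_le_rpow hspos.le h1 hδ.le
      _ = ((k:ℝ) + 1) ^ (1/α) * (a + 1) ^ (1/α) :=
          Real.mul_rpow (by positivity) (by positivity)
      _ ≤ ((k:ℝ) + 1) ^ (1/α) * (a + 1) :=
          mul_le_mul_of_nonneg_left h7 (by positivity)
      _ = (a + 1) * ((k:ℝ) + 1) ^ (1/α) := by ring
  have key : C / ((k:ℝ) + 1) * (Real.Gamma s * s ^ (1/α)) ≤ (1/2) * Real.Gamma s := by
    have h2 : C * s ^ (1/α) ≤ ((k:ℝ) + 1) / 2 := by
      have h4 : ((k:ℝ) + 1) ^ (1/α) = ((k:ℝ)+1) ^ (1/α - 1) * ((k:ℝ)+1) := by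
        rw [← Real.rpow_add_one (by positivity)]
        ring_nf
      have h6 : C * (a+1) * (1 / (2 * C * (a+1))) = 1/2 := by field_simp
      have h3 : C * ((a + 1) * ((k:ℝ) + 1) ^ (1/α)) ≤ ((k:ℝ)+1) / 2 := by
        rw [h4]
        have h5 : C * (a+1) * (((k:ℝ)+1) ^ (1/α - 1)) ≤ C * (a+1) * (1 / (2 * C * (a+1))) := by
          gcongr
        calc C * ((a + 1) * (((k:ℝ)+1) ^ (1/α - 1) * ((k:ℝ)+1)))
            = (C * (a+1) * (((k:ℝ)+1) ^ (1/α - 1))) * ((k:ℝ)+1) := by ring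
          _ ≤ (1/2) * ((k:ℝ)+1) := by
              apply mul_le_mul_of_nonneg_right _ (by positivity)
              rw [← h6]; exact h5
          _ = ((k:ℝ)+1)/2 := by ring
      calc C * s ^ (1/α) ≤ C * ((a + 1) * ((k:ℝ) + 1) ^ (1/α)) := by
            apply mul_le_mul_of_nonneg_left _ hC.le
            exact hsb
        _ ≤ ((k:ℝ)+1)/2 := h3
    calc C / ((k:ℝ) + 1) * (Real.Gamma s * s ^ (1/α))
        = (C * s ^ (1/α)) * Real.Gamma s / ((k:ℝ)+1) := by ring
      _ ≤ (((k:ℝ)+1)/2) * Real.Gamma s / ((k:ℝ)+1) := by gcongr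
      _ = (1/2) * Real.Gamma s := by field_simp
  have hsc : C ^ (k+1) / (((k:ℝ)+1) * (k ! : ℝ)) = C ^ k / k ! * (C / ((k:ℝ)+1)) := by
    rw [pow_succ]
    field_simp
  have hfact : (((k+1)! : ℕ) : ℝ) = ((k:ℝ)+1) * (k ! : ℝ) := by
    rw [Nat.factorial_succ]; push_cast; ring
  rw [Real.norm_of_nonneg, Real.norm_of_nonneg]
  · calc C ^ (k+1) / ((k+1)! : ℝ) * Real.Gamma (((((k+1:ℕ) : ℝ)) + a) / α)
        = C ^ k / k ! * (C / ((k:ℝ)+1)) * Real.Gamma (s + 1/α) := by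
          rw [hfact, hsc, hcast, hstep]
      _ ≤ C ^ k / k ! * (C / ((k:ℝ)+1)) * (Real.Gamma s * s ^ (1/α)) := by
          apply mul_le_mul_of_nonneg_left hG (by positivity)
      _ = C ^ k / k ! * (C / ((k:ℝ) + 1) * (Real.Gamma s * s ^ (1/α))) := by ring
      _ ≤ C ^ k / k ! * ((1/2) * Real.Gamma s) := by
          apply mul_le_mul_of_nonneg_left key (by positivity)
      _ = 1/2 * (C ^ k / k ! * Real.Gamma s) := by ring
  · positivity
  · have : (((k+1:ℕ) : ℝ)) + a = (k:ℝ) + 1 + a := by push_cast; ring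
    rw [this, hstep]
    positivity

lemma aux_parity (θ : ℝ) (j : ℕ) :
    Real.sin (((j:ℝ)+1) * (π/2 - θ)) = (-1)^j * Real.sin (((j:ℝ)+1) * (π/2 + θ)) := by
  have e1 : ((j:ℝ)+1) * (π/2 - θ) = ((j:ℝ)+1)*(π/2) - ((j:ℝ)+1)*θ := by ring
  have e2 : ((j:ℝ)+1) * (π/2 + θ) = ((j:ℝ)+1)*(π/2) + ((j:ℝ)+1)*θ := by ring
  rw [e1, e2, Real.sin_sub, Real.sin_add]
  rcases Nat.even_or_odd j with hj | hj
  · obtain ⟨l, hl⟩ := hj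
    have hcos : Real.cos (((j:ℝ)+1)*(π/2)) = 0 := by
      have e3 : ((j:ℝ)+1)*(π/2) = (l:ℝ)*π + π/2 := by
        subst hl; push_cast; ring
      rw [e3, Real.cos_add_pi_div_two, Real.sin_nat_mul_pi, neg_zero]
    rw [hcos, (Even.neg_one_pow ⟨l, hl⟩ : ((-1:ℝ))^j = 1)]
    ring
  · obtain ⟨l, hl⟩ := hj
    have hsin : Real.sin (((j:ℝ)+1)*(π/2)) = 0 := by
      have e3 : ((j:ℝ)+1)*(π/2) = ((l+1 : ℕ):ℝ)*π := by
        subst hl; push_cast; ring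
      rw [e3, Real.sin_nat_mul_pi]
    rw [hsin, (Odd.neg_one_pow ⟨l, hl⟩ : ((-1:ℝ))^j = -1)]
    ring

lemma aux_eqOn {α t : ℝ} (hα : 1 < α) (x c : ℝ) (k : ℕ) :
    EqOn (fun y : ℝ => (x ^ k / k ! * c) * (y ^ ((k:ℝ) + α - 1) * Real.exp (-t * y ^ α)))
      (fun y : ℝ => Real.exp (-t * y ^ α) * y ^ (α - 1) * ((x * y) ^ k / k ! * c))
      (Ioi (0:ℝ)) := by
  intro y hy
  have hy0 : (0:ℝ) < y := hy
  have h1 : y ^ ((k:ℝ) + α - 1) = y ^ (k : ℕ) * y ^ (α - 1) := by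
    rw [show (k:ℝ) + α - 1 = (k:ℝ) + (α - 1) by ring, Real.rpow_add hy0,
      Real.rpow_natCast]
  simp only
  rw [h1, mul_pow]
  ring

lemma aux_g_integrable {α t : ℝ} (hα : 1 < α) (ht : 0 < t) (x c : ℝ) (k : ℕ) :
    IntegrableOn
      (fun y : ℝ => Real.exp (-t * y ^ α) * y ^ (α - 1) * ((x * y) ^ k / k ! * c))
      (Ioi (0:ℝ)) := by
  have hq : (-1:ℝ) < (k:ℝ) + α - 1 := by
    have := Nat.cast_nonneg (α := ℝ) k; linarith
  have base := integrableOn_rpow_mul_exp_neg_mul_rpow hq (by linarith : (0:ℝ) < α) ht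
  exact IntegrableOn.congr_fun (base.const_mul (x ^ k / k ! * c))
    (aux_eqOn hα x c k) measurableSet_Ioi

lemma aux_g_integral {α t : ℝ} (hα : 1 < α) (ht : 0 < t) (x c : ℝ) (k : ℕ) :
    ∫ y in Ioi (0:ℝ), Real.exp (-t * y ^ α) * y ^ (α - 1) * ((x * y) ^ k / k ! * c)
      = (x ^ k / k ! * c) *
        (t ^ (-((k:ℝ) + α) / α) * (1 / α) * Real.Gamma (((k:ℝ) + α) / α)) := by
  have hq : (-1:ℝ) < (k:ℝ) + α - 1 := by
    have := Nat.cast_nonneg (α := ℝ) k; linarith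
  have hα0 : (0:ℝ) < α := by linarith
  rw [← setIntegral_congr_fun measurableSet_Ioi (aux_eqOn hα x c k) (μ := volume),
    integral_const_mul, integral_rpow_mul_exp_neg_mul_rpow hα0 hq ht,
    show (k:ℝ) + α - 1 + 1 = (k:ℝ) + α by ring]

lemma aux_g_norm_integral {α t : ℝ} (hα : 1 < α) (ht : 0 < t) (x c : ℝ) (k : ℕ) :
    ∫ y in Ioi (0:ℝ), ‖Real.exp (-t * y ^ α) * y ^ (α - 1) * ((x * y) ^ k / k ! * c)‖
      = (|x| ^ k / k ! * |c|) *
        (t ^ (-((k:ℝ) + α) / α) * (1 / α) * Real.Gamma (((k:ℝ) + α) / α)) := by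
  have h := aux_g_integral hα ht |x| |c| k
  rw [← h]
  refine setIntegral_congr_fun measurableSet_Ioi (fun y hy => ?_)
  have hy0 : (0:ℝ) < y := hy
  rw [Real.norm_eq_abs, abs_mul, abs_mul, abs_mul, abs_div, abs_pow, abs_mul,
    abs_of_pos (Real.exp_pos _), abs_of_nonneg (Real.rpow_nonneg hy0.le _),
    abs_of_pos hy0, Nat.abs_cast]

/-- The generalized Airy function `Ai_α`, defined for `α > 1` by its
(everywhere absolutely convergent) power series. -/
noncomputable def genAiry (α x : ℝ) : ℝ :=
  (1 / (π * α ^ ((α - 1) / α))) *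
    ∑' k : ℕ, (α ^ ((k : ℝ) / α) * x ^ k / k.factorial) *
      Real.Gamma ((k + 1) / α) * Real.sin (π * (k + 1) * (α + 1) / (2 * α))

/-- For `α > 1`, `t > 0`, `p ∈ [0,1]` and `x ≠ 0`, the
asymmetric Fresnel pseudo-density
`u_{2α,p}(x,t) = (1/(αt)^{1/α}) [ p·Ai_α(−x/(αt)^{1/α}) + (1−p)·Ai_α(x/(αt)^{1/α}) ]`
admits the integral representation
`u_{2α,p}(x,t) = (α t/(π x)) ∫_0^∞ e^{-t y^α} y^{α-1} sin(x y cos(π/(2α)))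
  ( p e^{x y sin(π/(2α))} + (1−p) e^{−x y sin(π/(2α))} ) dy`. -/
theorem asymmetricFresnel_integral_repr (α t p x : ℝ) (hα : 1 < α) (ht : 0 < t)
    (hp0 : 0 ≤ p) (hp1 : p ≤ 1) (hx : x ≠ 0) :
    (1 / (α * t) ^ (1 / α)) *
        (p * genAiry α (-(x / (α * t) ^ (1 / α))) +
          (1 - p) * genAiry α (x / (α * t) ^ (1 / α))) =
      (α * t / (π * x)) *
        ∫ y in Ioi (0 : ℝ), Real.exp (-t * y ^ α) * y ^ (α - 1) *
          Real.sin (x * y * Real.cos (π / (2 * α))) *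
          (p * Real.exp (x * y * Real.sin (π / (2 * α))) +
            (1 - p) * Real.exp (-(x * y * Real.sin (π / (2 * α))))) := by
  have hα0 : (0:ℝ) < α := by linarith
  have hαt : (0:ℝ) < α * t := by positivity
  have hπ : (0:ℝ) < π := Real.pi_pos
  have hxa : (0:ℝ) < |x| := abs_pos.mpr hx
  set θ : ℝ := π / (2 * α) with hθ
  set T : ℝ := (α * t) ^ (1 / α) with hT
  have hT0 : 0 < T := Real.rpow_pos_of_pos hαt _
  set s : ℕ → ℝ := fun k =>
    p * Real.sin (k * (π / 2 - θ)) + (1 - p) * Real.sin (k * (π / 2 + θ)) with hsdef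
  have hsabs : ∀ k, |s k| ≤ 1 := by
    intro k
    calc |s k| ≤ |p * Real.sin (k * (π / 2 - θ))| + |(1 - p) * Real.sin (k * (π / 2 + θ))| :=
          abs_add_le _ _
      _ ≤ p * 1 + (1 - p) * 1 := by
          rw [abs_mul, abs_mul, abs_of_nonneg hp0, abs_of_nonneg (by linarith : (0:ℝ) ≤ 1 - p)]
          exact add_le_add
            (mul_le_mul_of_nonneg_left (Real.abs_sin_le_one _) hp0)
            (mul_le_mul_of_nonneg_left (Real.abs_sin_le_one _) (by linarith))
      _ = 1 := by ring
  -- pointwise series expansion of the integrand factor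
  have hpt : ∀ y : ℝ,
      Real.sin (x * y * Real.cos θ) *
        (p * Real.exp (x * y * Real.sin θ) + (1 - p) * Real.exp (-(x * y * Real.sin θ)))
      = ∑' k : ℕ, (x * y) ^ k / k ! * s k := by
    intro y
    set a : ℝ := x * y with ha
    have h1 := aux_series a θ
    have h2 := aux_series a (-θ)
    rw [Real.cos_neg, Real.sin_neg, mul_neg] at h2
    have h2' : Real.sin (a * Real.cos θ) * Real.exp (-(a * Real.sin θ)) =
        ∑' k : ℕ, a ^ k / k ! * Real.sin (k * (π / 2 + θ)) := by
      rw [h2]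
      exact tsum_congr fun k => by rw [sub_neg_eq_add]
    have hb1 : ∀ ψ : ℝ, ∀ k : ℕ, ‖a ^ k / k ! * Real.sin ((k : ℝ) * ψ)‖ ≤ |a| ^ k / k ! := by
      intro ψ k
      calc ‖a ^ k / k ! * Real.sin ((k : ℝ) * ψ)‖
          = |a| ^ k / k ! * |Real.sin ((k : ℝ) * ψ)| := by
            rw [Real.norm_eq_abs, abs_mul, abs_div, abs_pow, Nat.abs_cast]
        _ ≤ |a| ^ k / k ! * 1 := by
            gcongr
            exact Real.abs_sin_le_one _
        _ = |a| ^ k / k ! := mul_one _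
    have S1 : Summable (fun k : ℕ => a ^ k / k ! * Real.sin (k * (π / 2 - θ))) :=
      Summable.of_norm_bounded (Real.summable_pow_div_factorial |a|) (hb1 _)
    have S2 : Summable (fun k : ℕ => a ^ k / k ! * Real.sin (k * (π / 2 + θ))) :=
      Summable.of_norm_bounded (Real.summable_pow_div_factorial |a|) (hb1 _)
    calc Real.sin (a * Real.cos θ) *
          (p * Real.exp (a * Real.sin θ) + (1 - p) * Real.exp (-(a * Real.sin θ)))
        = p * (Real.sin (a * Real.cos θ) * Real.exp (a * Real.sin θ)) +
            (1 - p) * (Real.sin (a * Real.cos θ) * Real.exp (-(a * Real.sin θ))) := by ring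
      _ = p * ∑' k : ℕ, a ^ k / k ! * Real.sin (k * (π / 2 - θ)) +
            (1 - p) * ∑' k : ℕ, a ^ k / k ! * Real.sin (k * (π / 2 + θ)) := by rw [h1, h2']
      _ = (∑' k : ℕ, p * (a ^ k / k ! * Real.sin (k * (π / 2 - θ)))) +
            ∑' k : ℕ, (1 - p) * (a ^ k / k ! * Real.sin (k * (π / 2 + θ))) := by
          rw [tsum_mul_left, tsum_mul_left]
      _ = ∑' k : ℕ, (p * (a ^ k / k ! * Real.sin (k * (π / 2 - θ))) +
            (1 - p) * (a ^ k / k ! * Real.sin (k * (π / 2 + θ)))) :=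
          (Summable.tsum_add (S1.mul_left p) (S2.mul_left (1 - p))).symm
      _ = ∑' k : ℕ, a ^ k / k ! * s k := by
          refine tsum_congr fun k => ?_
          rw [hsdef]
          ring
  -- summand functions for the integral side
  set g : ℕ → ℝ → ℝ := fun k y =>
    Real.exp (-t * y ^ α) * y ^ (α - 1) * ((x * y) ^ k / k ! * s k) with hg
  have hint : ∀ k, IntegrableOn (g k) (Ioi (0:ℝ)) := fun k => aux_g_integrable hα ht x (s k) k
  have hval : ∀ k, ∫ y in Ioi (0:ℝ), g k y
      = (x ^ k / k ! * s k) *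
        (t ^ (-((k:ℝ) + α) / α) * (1 / α) * Real.Gamma (((k:ℝ) + α) / α)) :=
    fun k => aux_g_integral hα ht x (s k) k
  have htk : ∀ k : ℕ, t ^ (-((k:ℝ) + α) / α) = (t ^ (-(1/α))) ^ k * t ^ (-1:ℝ) := by
    intro k
    rw [show -((k:ℝ) + α) / α = (-(1/α)) * (k:ℝ) + (-1) by field_simp; ring,
      Real.rpow_add ht, Real.rpow_mul ht.le, Real.rpow_natCast]
  have hΓpos : ∀ k : ℕ, 0 < Real.Gamma (((k:ℝ) + α) / α) := fun k =>
    Real.Gamma_pos_of_pos (by positivity)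
  set M : ℕ → ℝ := fun k =>
    (1/α) * t ^ (-1:ℝ) * ((|x| * t ^ (-(1/α))) ^ k / k ! * Real.Gamma (((k:ℝ) + α) / α)) with hM
  have hMsum : Summable M := (aux_summable hα α (|x| * t ^ (-(1/α))) hα0 (by positivity)).mul_left _
  have hle : ∀ k, (∫ y in Ioi (0:ℝ), ‖g k y‖) ≤ M k := by
    intro k
    rw [hg, hM]
    simp only
    rw [aux_g_norm_integral hα ht x (s k) k]
    have hB : (0:ℝ) ≤ t ^ (-((k:ℝ) + α) / α) * (1 / α) * Real.Gamma (((k:ℝ) + α) / α) :=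
      mul_nonneg (mul_nonneg (Real.rpow_nonneg ht.le _) (by positivity)) (hΓpos k).le
    calc |x| ^ k / k ! * |s k| *
          (t ^ (-((k:ℝ) + α) / α) * (1 / α) * Real.Gamma (((k:ℝ) + α) / α))
        ≤ |x| ^ k / k ! * 1 *
          (t ^ (-((k:ℝ) + α) / α) * (1 / α) * Real.Gamma (((k:ℝ) + α) / α)) := by
          exact mul_le_mul_of_nonneg_right
            (mul_le_mul_of_nonneg_left (hsabs k) (by positivity)) hB
      _ = (1/α) * t ^ (-1:ℝ) *
          ((|x| * t ^ (-(1/α))) ^ k / k ! * Real.Gamma (((k:ℝ) + α) / α)) := by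
          rw [htk k, mul_pow]
          ring
  have hnormsum : Summable (fun k => ∫ y in Ioi (0:ℝ), ‖g k y‖) :=
    hMsum.of_nonneg_of_le (fun k => integral_nonneg fun y => norm_nonneg _) hle
  have hIsum : Summable (fun k => ∫ y in Ioi (0:ℝ), g k y) :=
    Summable.of_norm_bounded hMsum
      (fun k => (norm_integral_le_integral_norm _).trans (hle k))
  have hRHSint : (∫ y in Ioi (0:ℝ), Real.exp (-t * y ^ α) * y ^ (α - 1) *
          Real.sin (x * y * Real.cos θ) *
          (p * Real.exp (x * y * Real.sin θ) + (1 - p) * Real.exp (-(x * y * Real.sin θ))))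
      = ∑' k : ℕ, ∫ y in Ioi (0:ℝ), g k y := by
    have h1 : ∀ y : ℝ, Real.exp (-t * y ^ α) * y ^ (α - 1) *
          Real.sin (x * y * Real.cos θ) *
          (p * Real.exp (x * y * Real.sin θ) + (1 - p) * Real.exp (-(x * y * Real.sin θ)))
        = ∑' k : ℕ, g k y := by
      intro y
      rw [mul_assoc, hpt y, ← tsum_mul_left]
    rw [show (∫ y in Ioi (0:ℝ), Real.exp (-t * y ^ α) * y ^ (α - 1) *
          Real.sin (x * y * Real.cos θ) *
          (p * Real.exp (x * y * Real.sin θ) + (1 - p) * Real.exp (-(x * y * Real.sin θ))))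
        = ∫ y in Ioi (0:ℝ), ∑' k : ℕ, g k y from
      integral_congr_ae (Filter.Eventually.of_forall fun y => h1 y)]
    exact (integral_tsum_of_summable_integral_norm hint hnormsum).symm
  have ht' : t ≠ 0 := ht.ne'
  have hπ' : π ≠ 0 := hπ.ne'
  have hα' : α ≠ 0 := hα0.ne'
  have hAs : ∀ j : ℕ, (α * t / (π * x)) * ∫ y in Ioi (0:ℝ), g (j+1) y
      = (1/(π*α)) * ((-1)^j * p + (1 - p)) * (x ^ j / j !) *
        t ^ (-(((j:ℝ) + 1) / α)) * Real.Gamma (((j:ℝ) + 1) / α) *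
        Real.sin (π * ((j:ℝ) + 1) * (α + 1) / (2 * α)) := by
    intro j
    have hjc : ((j+1 : ℕ) : ℝ) = (j:ℝ) + 1 := by push_cast; ring
    rw [hval (j+1), hjc]
    have hs1 : s (j+1) = ((-1)^j * p + (1 - p)) *
        Real.sin (π * ((j:ℝ) + 1) * (α + 1) / (2 * α)) := by
      rw [hsdef]
      simp only [hjc]
      have hb := aux_parity θ j
      have harg : ((j:ℝ)+1) * (π/2 + θ) = π * ((j:ℝ) + 1) * (α + 1) / (2 * α) := by
        rw [hθ]; field_simp
      rw [hb, harg]; ring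
    have hg1 : Real.Gamma ((((j:ℝ)+1) + α) / α)
        = (((j:ℝ)+1)/α) * Real.Gamma (((j:ℝ)+1)/α) := by
      rw [show (((j:ℝ)+1) + α)/α = ((j:ℝ)+1)/α + 1 by field_simp,
        Real.Gamma_add_one (by positivity : (0:ℝ) < ((j:ℝ)+1)/α).ne']
    have ht1 : t ^ (-(((j:ℝ)+1) + α) / α) = t ^ (-(((j:ℝ)+1) / α)) * t ^ (-1:ℝ) := by
      rw [← Real.rpow_add ht]; congr 1; field_simp; ring
    have hfact : (((j+1)! : ℕ) : ℝ) = ((j:ℝ)+1) * (j ! : ℝ) := by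
      rw [Nat.factorial_succ]; push_cast; ring
    rw [hs1, hg1, ht1, hfact, pow_succ, Real.rpow_neg_one]
    have hj1 : ((j:ℝ)+1) ≠ 0 := by positivity
    have hjf : (j ! : ℝ) ≠ 0 := by positivity
    field_simp
  have hRHS : (α * t / (π * x)) * (∫ y in Ioi (0:ℝ), Real.exp (-t * y ^ α) * y ^ (α - 1) *
          Real.sin (x * y * Real.cos θ) *
          (p * Real.exp (x * y * Real.sin θ) + (1 - p) * Real.exp (-(x * y * Real.sin θ))))
      = ∑' j : ℕ, (1/(π*α)) * ((-1)^j * p + (1 - p)) * (x ^ j / j !) *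
        t ^ (-(((j:ℝ) + 1) / α)) * Real.Gamma (((j:ℝ) + 1) / α) *
        Real.sin (π * ((j:ℝ) + 1) * (α + 1) / (2 * α)) := by
    rw [hRHSint, ← tsum_mul_left, Summable.tsum_eq_zero_add (hIsum.mul_left _)]
    have hs0 : s 0 = 0 := by rw [hsdef]; simp
    have h0 : (α * t / (π * x)) * ∫ y in Ioi (0:ℝ), g 0 y = 0 := by
      rw [hval 0, hs0]
      ring
    rw [h0, zero_add]
    exact tsum_congr hAs
  -- the series side
  have hαpow : ∀ k : ℕ, α ^ ((k:ℝ)/α) = (α ^ (1/α)) ^ k := by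
    intro k
    rw [show (k:ℝ)/α = (1/α) * (k:ℝ) by ring, Real.rpow_mul hα0.le, Real.rpow_natCast]
  have hLmaster := aux_summable hα 1 (α ^ (1/α) * (|x| / T)) one_pos (by positivity)
  have hub : ∀ z : ℝ, |z| = |x| / T → Summable (fun k : ℕ =>
      α ^ ((k:ℝ)/α) * z ^ k / k ! * Real.Gamma (((k:ℝ)+1)/α) *
        Real.sin (π * ((k:ℝ)+1) * (α+1)/(2*α))) := by
    intro z hz
    refine Summable.of_norm_bounded hLmaster (fun k => ?_)
    have hΓ : 0 < Real.Gamma (((k:ℝ)+1)/α) := Real.Gamma_pos_of_pos (by positivity)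
    calc ‖α ^ ((k:ℝ)/α) * z ^ k / k ! * Real.Gamma (((k:ℝ)+1)/α) *
          Real.sin (π * ((k:ℝ)+1) * (α+1)/(2*α))‖
        = α ^ ((k:ℝ)/α) * |z| ^ k / k ! * Real.Gamma (((k:ℝ)+1)/α) *
          |Real.sin (π * ((k:ℝ)+1) * (α+1)/(2*α))| := by
          rw [Real.norm_eq_abs, abs_mul, abs_mul, abs_div, abs_mul, abs_pow, Nat.abs_cast,
            abs_of_nonneg (Real.rpow_nonneg hα0.le _), abs_of_pos hΓ]
      _ ≤ α ^ ((k:ℝ)/α) * |z| ^ k / k ! * Real.Gamma (((k:ℝ)+1)/α) * 1 := by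
          exact mul_le_mul_of_nonneg_left (Real.abs_sin_le_one _)
            (mul_nonneg (by positivity) hΓ.le)
      _ = (α ^ (1/α) * (|x| / T)) ^ k / k ! * Real.Gamma (((k:ℝ)+1)/α) := by
          rw [mul_one, hαpow k, hz, mul_pow]
  have hTsplit : T = α ^ (1/α) * t ^ (1/α) := by rw [hT, Real.mul_rpow hα0.le ht.le]
  have hTj : ∀ j : ℕ, T ^ j = α ^ ((j:ℝ)/α) * t ^ ((j:ℝ)/α) := by
    intro j
    rw [hT, ← Real.rpow_natCast ((α*t) ^ (1/α)) j, ← Real.rpow_mul hαt.le,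
      show (1/α) * (j:ℝ) = (j:ℝ)/α by ring, Real.mul_rpow hα0.le ht.le]
  have h1 : α ^ ((α-1)/α) * α ^ (1/α) = α := by
    rw [← Real.rpow_add hα0, ← add_div, sub_add_cancel, div_self hα0.ne', Real.rpow_one]
  have hscal : ∀ j : ℕ, (1/T) * (1 / (π * α ^ ((α-1)/α))) * (α ^ ((j:ℝ)/α) / T ^ j)
      = (1/(π*α)) * t ^ (-(((j:ℝ)+1)/α)) := by
    intro j
    have e2 : t ^ (1/α) * t ^ ((j:ℝ)/α) = t ^ (((j:ℝ)+1)/α) := by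
      rw [← Real.rpow_add ht]; congr 1; ring
    have hpos1 : (0:ℝ) < α ^ (1/α) := Real.rpow_pos_of_pos hα0 _
    have hpos2 : (0:ℝ) < t ^ (1/α) := Real.rpow_pos_of_pos ht _
    have hpos3 : (0:ℝ) < α ^ ((j:ℝ)/α) := Real.rpow_pos_of_pos hα0 _
    have hpos4 : (0:ℝ) < t ^ ((j:ℝ)/α) := Real.rpow_pos_of_pos ht _
    have hpos5 : (0:ℝ) < α ^ ((α-1)/α) := Real.rpow_pos_of_pos hα0 _
    have main : (1/T) * (1 / (π * α ^ ((α-1)/α))) * (α ^ ((j:ℝ)/α) / T ^ j)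
        = 1 / (π * (α ^ ((α-1)/α) * α ^ (1/α))) * (t ^ (((j:ℝ)+1)/α))⁻¹ := by
      rw [hTj j, hTsplit, ← e2]
      field_simp
    rw [main, h1, Real.rpow_neg ht.le]
  have hLHS : (1 / T) * (p * genAiry α (-(x / T)) + (1 - p) * genAiry α (x / T))
      = ∑' j : ℕ, (1/(π*α)) * ((-1)^j * p + (1 - p)) * (x ^ j / j !) *
        t ^ (-(((j:ℝ) + 1) / α)) * Real.Gamma (((j:ℝ) + 1) / α) *
        Real.sin (π * ((j:ℝ) + 1) * (α + 1) / (2 * α)) := by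
    have hzm : |(-(x / T))| = |x| / T := by rw [abs_neg, abs_div, abs_of_pos hT0]
    have hzp : |x / T| = |x| / T := by rw [abs_div, abs_of_pos hT0]
    have Sm := hub _ hzm
    have Sp := hub _ hzp
    unfold genAiry
    calc (1/T) * (p * ((1 / (π * α ^ ((α-1)/α))) *
            ∑' k : ℕ, α ^ ((k:ℝ)/α) * (-(x/T)) ^ k / k ! * Real.Gamma (((k:ℝ)+1)/α) *
              Real.sin (π * ((k:ℝ)+1) * (α+1)/(2*α))) +
          (1 - p) * ((1 / (π * α ^ ((α-1)/α))) *
            ∑' k : ℕ, α ^ ((k:ℝ)/α) * (x/T) ^ k / k ! * Real.Gamma (((k:ℝ)+1)/α) *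
              Real.sin (π * ((k:ℝ)+1) * (α+1)/(2*α))))
        = ((1/T) * p * (1 / (π * α ^ ((α-1)/α)))) *
            (∑' k : ℕ, α ^ ((k:ℝ)/α) * (-(x/T)) ^ k / k ! * Real.Gamma (((k:ℝ)+1)/α) *
              Real.sin (π * ((k:ℝ)+1) * (α+1)/(2*α))) +
          ((1/T) * (1 - p) * (1 / (π * α ^ ((α-1)/α)))) *
            ∑' k : ℕ, α ^ ((k:ℝ)/α) * (x/T) ^ k / k ! * Real.Gamma (((k:ℝ)+1)/α) *
              Real.sin (π * ((k:ℝ)+1) * (α+1)/(2*α)) := by ring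
      _ = (∑' k : ℕ, ((1/T) * p * (1 / (π * α ^ ((α-1)/α)))) *
            (α ^ ((k:ℝ)/α) * (-(x/T)) ^ k / k ! * Real.Gamma (((k:ℝ)+1)/α) *
              Real.sin (π * ((k:ℝ)+1) * (α+1)/(2*α)))) +
          ∑' k : ℕ, ((1/T) * (1 - p) * (1 / (π * α ^ ((α-1)/α)))) *
            (α ^ ((k:ℝ)/α) * (x/T) ^ k / k ! * Real.Gamma (((k:ℝ)+1)/α) *
              Real.sin (π * ((k:ℝ)+1) * (α+1)/(2*α))) := by
          rw [tsum_mul_left, tsum_mul_left]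
      _ = ∑' k : ℕ, (((1/T) * p * (1 / (π * α ^ ((α-1)/α)))) *
            (α ^ ((k:ℝ)/α) * (-(x/T)) ^ k / k ! * Real.Gamma (((k:ℝ)+1)/α) *
              Real.sin (π * ((k:ℝ)+1) * (α+1)/(2*α))) +
          ((1/T) * (1 - p) * (1 / (π * α ^ ((α-1)/α)))) *
            (α ^ ((k:ℝ)/α) * (x/T) ^ k / k ! * Real.Gamma (((k:ℝ)+1)/α) *
              Real.sin (π * ((k:ℝ)+1) * (α+1)/(2*α)))) :=
          (Summable.tsum_add (Sm.mul_left _) (Sp.mul_left _)).symm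
      _ = ∑' j : ℕ, (1/(π*α)) * ((-1)^j * p + (1 - p)) * (x ^ j / j !) *
            t ^ (-(((j:ℝ) + 1) / α)) * Real.Gamma (((j:ℝ) + 1) / α) *
            Real.sin (π * ((j:ℝ) + 1) * (α + 1) / (2 * α)) := by
          refine tsum_congr fun j => ?_
          have e := hscal j
          calc ((1/T) * p * (1 / (π * α ^ ((α-1)/α)))) *
                (α ^ ((j:ℝ)/α) * (-(x/T)) ^ j / j ! * Real.Gamma (((j:ℝ)+1)/α) *
                  Real.sin (π * ((j:ℝ)+1) * (α+1)/(2*α))) +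
              ((1/T) * (1 - p) * (1 / (π * α ^ ((α-1)/α)))) *
                (α ^ ((j:ℝ)/α) * (x/T) ^ j / j ! * Real.Gamma (((j:ℝ)+1)/α) *
                  Real.sin (π * ((j:ℝ)+1) * (α+1)/(2*α)))
              = ((1/T) * (1 / (π * α ^ ((α-1)/α))) * (α ^ ((j:ℝ)/α) / T ^ j)) *
                (((-1)^j * p + (1 - p)) * (x ^ j / j !) * Real.Gamma (((j:ℝ)+1)/α) *
                  Real.sin (π * ((j:ℝ)+1) * (α+1)/(2*α))) := by
                rw [neg_pow, div_pow]
                ring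
            _ = (1/(π*α)) * ((-1)^j * p + (1 - p)) * (x ^ j / j !) *
                t ^ (-(((j:ℝ) + 1) / α)) * Real.Gamma (((j:ℝ) + 1) / α) *
                Real.sin (π * ((j:ℝ) + 1) * (α + 1) / (2 * α)) := by
                rw [e]
                ring
  rw [hLHS]
  exact hRHS.symm
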